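/- Under the standing hypotheses, let e be any edge of T and assume that removing e from T leaves two connected components C₁ and C₂. Then for any points a, b ∈ C with a ∈ C₁^ε and b ∈ C₂^ε, and any shortest path s connecting a to b in the graph G, there exists a point p ∈ C lying on the path s with p ∈ e^ε. -/

import Mathlib

open scoped Classical

noncomputable section

namespace Skel

/-- `m`-dimensional Euclidean space. -/
abbrev Euc (m : ℕ) : Type := EuclideanSpace ℝ (Fin m)

/-- Length (Euclidean distance between the two members) of an unordered pair of points. -/
def sym2Dist {X : Type*} [PseudoMetricSpace X] : Sym2 X → ℝ :=
  Sym2.lift ⟨fun u v => dist u v, fun u v => dist_comm u v⟩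

/-- Euclidean length of an edge under a vertex placement `pos`. -/
def edgeLen {V : Type*} {m : ℕ} (pos : V → Euc m) (e : Sym2 V) : ℝ :=
  sym2Dist (e.map pos)

/-- Straight-line segment realizing an unordered pair of vertices. -/
def edgeSeg {V : Type*} {m : ℕ} (pos : V → Euc m) : Sym2 V → Set (Euc m) :=
  Sym2.lift ⟨fun u v => segment ℝ (pos u) (pos v), fun u v => segment_symm ℝ (pos u) (pos v)⟩

/-- Closed `ε`-offset of a set. -/
def offset {X : Type*} [PseudoMetricSpace X] (S : Set X) (ε : ℝ) : Set X :=
  {x | ∃ y ∈ S, dist x y ≤ ε}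

/-- Geometric realization (union of straight-line edges) of a graph. -/
def shape {V : Type*} {m : ℕ} (G : SimpleGraph V) (pos : V → Euc m) : Set (Euc m) :=
  ⋃ e ∈ G.edgeSet, edgeSeg pos e

/-- Geometric realization of the portion of a graph inside a vertex subset `S`. -/
def shapeOn {V : Type*} {m : ℕ} (G : SimpleGraph V) (pos : V → Euc m) (S : Set V) :
    Set (Euc m) :=
  (pos '' S) ∪ ⋃ e ∈ {e ∈ G.edgeSet | ∀ x ∈ e, x ∈ S}, edgeSeg pos e

/-- Total length of a walk in a geometric graph. -/
def walkCost {X : Type*} [PseudoMetricSpace X] {G : SimpleGraph X} {u v : X}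
    (p : G.Walk u v) : ℝ :=
  (p.edges.map sym2Dist).sum

/-- Shortest-path metric of a geometric graph (edges weighted by Euclidean length). -/
def pathDist {X : Type*} [PseudoMetricSpace X] (G : SimpleGraph X) (u v : X) : ℝ :=
  sInf {c | ∃ p : G.Walk u v, walkCost p = c}

/-- Maximal edge length of a geometric graph. -/
def lmax {X : Type*} [PseudoMetricSpace X] (G : SimpleGraph X) : ℝ :=
  sSup (sym2Dist '' G.edgeSet)

/-- Minimal distance between two sets. -/
def setDist {X : Type*} [PseudoMetricSpace X] (s t : Set X) : ℝ :=
  sInf {d | ∃ x ∈ s, ∃ y ∈ t, d = dist x y}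

/-- Two edges (unordered pairs) are non-adjacent: distinct and sharing no vertex. -/
def nonAdjacent {V : Type*} (e h : Sym2 V) : Prop :=
  e ≠ h ∧ ∀ x, x ∈ e → x ∉ h

/-- The set of angles between pairs of (distinct) edges adjacent at a common vertex. -/
def angleSet {V : Type*} {m : ℕ} (T : SimpleGraph V) (pos : V → Euc m) : Set ℝ :=
  {θ | ∃ v a b : V, T.Adj v a ∧ T.Adj v b ∧ a ≠ b ∧
    θ = EuclideanGeometry.angle (pos a) (pos v) (pos b)}

/-- Total edge cost of a graph, edges weighted by `d`. -/
def graphCost {X : Type*} (d : X → X → ℝ) (W : SimpleGraph X) : ℝ :=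
  (∑ᶠ u, ∑ᶠ v, if W.Adj u v then d u v else 0) / 2

/-- A minimum spanning tree on the whole vertex type, edges weighted by `d`. -/
def IsMST {X : Type*} (d : X → X → ℝ) (W : SimpleGraph X) : Prop :=
  W.IsTree ∧ ∀ W' : SimpleGraph X, W'.IsTree → graphCost d W ≤ graphCost d W'

/-- A graph on an ambient type whose edges lie in `S` and which spans `S` as a tree. -/
def IsSpanningTreeOn {X : Type*} (S : Set X) (W : SimpleGraph X) : Prop :=
  (∀ a b, W.Adj a b → a ∈ S ∧ b ∈ S) ∧ (W.induce S).IsTree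

/-- A minimum spanning tree of the metric subspace `(S, d)`, realized on the ambient type. -/
def IsMSTOn {X : Type*} (d : X → X → ℝ) (S : Set X) (W : SimpleGraph X) : Prop :=
  IsSpanningTreeOn S W ∧
    ∀ W' : SimpleGraph X, IsSpanningTreeOn S W' → graphCost d W ≤ graphCost d W'

/-- Graph-cover `(𝒱, ℰ)` of the space `X`. -/
def IsGraphCover {X : Type*} (V : Set X) (E : Set (Set X)) : Prop :=
  V.Finite ∧ E.Finite ∧ ⋃₀ E = Set.univ ∧
    (∀ A ∈ E, ∀ B ∈ E, A ≠ B → (A ∩ B).Subsingleton ∧ A ∩ B ⊆ V) ∧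
    (∀ A ∈ E, ∃ u v : X, u ≠ v ∧ V ∩ A = {u, v})

/-- Underlying simple graph of the nerve of a cover. -/
def nerve {X : Type*} (V : Set X) (E : Set (Set X)) : SimpleGraph V where
  Adj u v := u ≠ v ∧ ∃ A ∈ E, (u : X) ∈ A ∧ (v : X) ∈ A
  symm := ⟨by
    rintro u v ⟨h, A, hA, hu, hv⟩
    exact ⟨Ne.symm h, A, hA, hv, hu⟩⟩
  loopless := ⟨by
    rintro u ⟨h, -⟩
    exact h rfl⟩

/-- The nerve, as a multigraph with one edge per cover set, is a tree:
its underlying simple graph is a tree and there are no parallel edges. -/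
def NerveIsTree {X : Type*} (V : Set X) (E : Set (Set X)) : Prop :=
  (nerve V E).IsTree ∧
    ∀ A ∈ E, ∀ B ∈ E, ∀ u v : X, u ≠ v → u ∈ V → v ∈ V →
      u ∈ A → v ∈ A → u ∈ B → v ∈ B → A = B

/-- Tree-cover of a space with distance function `d`. -/
def IsTreeCover {X : Type*} (d : X → X → ℝ) (V : Set X) (E : Set (Set X)) : Prop :=
  IsGraphCover V E ∧ NerveIsTree V E ∧
    ∀ u v : X, u ≠ v → (¬ ∃ A ∈ E, u ∈ A ∧ v ∈ A) →
      ∃ t : X, max (d u t) (d v t) < d u v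

/-- Standing hypotheses: `T` is a straight-line tree realized by `pos` in `ℝ^m`,
`C` is an `ε`-sample of `T`, `G` is a connected graph with vertex set `C` which is a
`γ`-approximation of `(T, C)`, `D ⊆ C` is `δ`-sparse in the path metric of `G`,
every vertex of `T` lies within `ε` of `D`, `θT` is the minimal angle between adjacent
edges of `T`, and `δ` satisfies the key inequality. -/
structure Standing {V : Type*} {m : ℕ} (T : SimpleGraph V) (pos : V → Euc m)
    (C D : Set (Euc m)) (G : SimpleGraph (Euc m)) (γ ε δ θT : ℝ) : Prop where
  tree : T.IsTree
  pos_inj : Function.Injective pos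
  eps_pos : 0 < ε
  gamma_ge : 1 ≤ γ
  C_fin : C.Finite
  sample : ∀ p ∈ C, ∃ q ∈ shape T pos, dist p q ≤ ε
  G_support : ∀ a b, G.Adj a b → a ∈ C ∧ b ∈ C
  G_conn : ∀ a ∈ C, ∀ b ∈ C, G.Reachable a b
  approx1 : ∀ e ∈ T.edgeSet, ∀ a ∈ C, ∀ b ∈ C,
      a ∈ offset (edgeSeg pos e) ε → b ∈ offset (edgeSeg pos e) ε →
      pathDist G a b ≤ γ * dist a b
  approx2 : ∀ e ∈ T.edgeSet, ∀ h ∈ T.edgeSet, nonAdjacent e h →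
      lmax G + 2 * ε < setDist (edgeSeg pos e) (edgeSeg pos h)
  D_sub : D ⊆ C
  sparse : ∀ a ∈ D, ∀ b ∈ D, a ≠ b → δ ≤ pathDist G a b
  vert_close : ∀ v : V, ∃ p ∈ D, dist (pos v) p ≤ ε
  theta_least : IsLeast (angleSet T pos) θT
  delta_ge : 2 * γ * (ε + ε / Real.sin (θT / 2)
      + lmax G / Real.sin (min θT (Real.pi / 2))) ≤ δ

end Skel

open Skel

/-- Every vertex on a walk starting in `C` lies in `C`, if all edges of `G` have
endpoints in `C`. -/
lemma aux_walk_support_mem {X : Type*} {G : SimpleGraph X} {C : Set X}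
    (hG : ∀ a b, G.Adj a b → a ∈ C ∧ b ∈ C) :
    ∀ {a b : X} (w : G.Walk a b), a ∈ C → ∀ p ∈ w.support, p ∈ C := by
  intro a b w
  induction w with
  | nil =>
    intro ha p hp
    simp only [SimpleGraph.Walk.support_nil, List.mem_singleton] at hp
    subst hp; exact ha
  | cons h w ih =>
    intro ha p hp
    rw [SimpleGraph.Walk.support_cons] at hp
    rcases List.mem_cons.mp hp with rfl | hp
    · exact ha
    · exact ih (hG _ _ h).2 p hp

/-- If a walk starts at a point satisfying `S₁` and ends at a point satisfying `S₂`,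
with every support point satisfying `S₁` or `S₂` and the two being exclusive, then some
edge of the walk crosses from `S₁` to `S₂`. -/
lemma aux_walk_flip {X : Type*} {G : SimpleGraph X} (S₁ S₂ : X → Prop)
    (hexcl : ∀ p, S₁ p → S₂ p → False) :
    ∀ {a b : X} (w : G.Walk a b), (∀ p ∈ w.support, S₁ p ∨ S₂ p) → S₁ a → S₂ b →
      ∃ p q, G.Adj p q ∧ S₁ p ∧ S₂ q := by
  intro a b w
  induction w with
  | nil => intro _ h1 h2; exact absurd (hexcl _ h1 h2) not_false
  | @cons a c b h w ih =>
    intro hall h1 h2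
    by_cases hc : S₂ c
    · exact ⟨a, c, h, h1, hc⟩
    · have hc1 : S₁ c := by
        rcases hall c (by simp [SimpleGraph.Walk.support_cons]) with h' | h'
        · exact h'
        · exact absurd h' hc
      exact ih (fun p hp => hall p (by simp [SimpleGraph.Walk.support_cons, hp])) hc1 h2

/-- Nonnegativity of the maximal edge length. -/
lemma aux_lmax_nonneg {X : Type*} [PseudoMetricSpace X] (G : SimpleGraph X) :
    0 ≤ lmax G := by
  apply Real.sSup_nonneg
  rintro x ⟨ed, hed, rfl⟩
  induction ed using Sym2.ind with
  | _ u v => exact dist_nonneg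

/-- Adjacent points of a geometric graph with finite support are at distance at
most `lmax`. -/
lemma aux_dist_le_lmax {m : ℕ} {G : SimpleGraph (Euc m)} {C : Set (Euc m)} (hC : C.Finite)
    (hG : ∀ a b, G.Adj a b → a ∈ C ∧ b ∈ C) {p q : Euc m} (h : G.Adj p q) :
    dist p q ≤ lmax G := by
  have hsub : sym2Dist '' G.edgeSet ⊆
      (fun pr : Euc m × Euc m => dist pr.1 pr.2) '' (C ×ˢ C) := by
    rintro x ⟨ed, hed, rfl⟩
    induction ed using Sym2.ind with
    | _ u v =>
      have huv := hG u v ((SimpleGraph.mem_edgeSet _).mp hed)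
      exact ⟨(u, v), ⟨huv.1, huv.2⟩, rfl⟩
  have hbdd : BddAbove (sym2Dist '' G.edgeSet) :=
    (((hC.prod hC).image _).bddAbove).mono hsub
  have hmem : dist p q ∈ sym2Dist '' G.edgeSet :=
    ⟨s(p, q), (SimpleGraph.mem_edgeSet _).mpr h, rfl⟩
  exact le_csSup hbdd hmem

/-- `setDist` is at most the distance between any two chosen points. -/
lemma aux_setDist_le {X : Type*} [PseudoMetricSpace X] {s t : Set X} {x y : X}
    (hx : x ∈ s) (hy : y ∈ t) : setDist s t ≤ dist x y := by
  apply csInf_le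
  · exact ⟨0, by rintro d ⟨u, -, v, -, rfl⟩; exact dist_nonneg⟩
  · exact ⟨x, hx, y, hy, rfl⟩

/-- Any edge of `T` other than `e` lies entirely in `C₁` or entirely in `C₂`. -/
lemma aux_edge_side {V : Type*} {T : SimpleGraph V} {e : Sym2 V} {C₁ C₂ : Set V}
    (hcomp : ∀ x y : V, (T.deleteEdges {e}).Reachable x y ↔
        ((x ∈ C₁ ∧ y ∈ C₁) ∨ (x ∈ C₂ ∧ y ∈ C₂)))
    (h : Sym2 V) (hh : h ∈ T.edgeSet) (hne : h ≠ e) :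
    (∀ x ∈ h, x ∈ C₁) ∨ (∀ x ∈ h, x ∈ C₂) := by
  induction h using Sym2.ind with
  | _ x y =>
    have hadj : T.Adj x y := (SimpleGraph.mem_edgeSet _).mp hh
    have hdel : (T.deleteEdges {e}).Adj x y := by
      rw [SimpleGraph.deleteEdges_adj]
      exact ⟨hadj, by simpa using hne⟩
    rcases (hcomp x y).mp hdel.reachable with ⟨hx, hy⟩ | ⟨hx, hy⟩
    · left
      intro z hz
      rcases Sym2.mem_iff.mp hz with rfl | rfl <;> assumption
    · right
      intro z hz
      rcases Sym2.mem_iff.mp hz with rfl | rfl <;> assumption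

/-- Every vertex of `T` is incident to some edge, as soon as `T` is connected and has
at least one edge. -/
lemma aux_exists_incident {V : Type*} {T : SimpleGraph V} (hT : T.Connected)
    {e : Sym2 V} (he : e ∈ T.edgeSet) (x : V) : ∃ y, T.Adj x y := by
  induction e using Sym2.ind with
  | _ u v =>
    have hadj : T.Adj u v := (SimpleGraph.mem_edgeSet _).mp he
    by_cases hx : x = u
    · exact ⟨v, hx ▸ hadj⟩
    · obtain ⟨w⟩ := hT.preconnected x u
      cases w with
      | nil => exact absurd rfl hx
      | cons h _ => exact ⟨_, h⟩

/-- If removing an edge `e` from `T` leaves two connected components `C₁, C₂`, then any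
shortest path in `G` between a cloud point near `C₁` and a cloud point near `C₂` passes
through a cloud point lying in `e^ε`. -/
theorem statement13 {m : ℕ} {V : Type*} [Finite V]
    (T : SimpleGraph V) (hT : T.IsTree) (pos : V → Euc m)
    (hpos : Function.Injective pos)
    (C : Set (Euc m)) (hC : C.Finite)
    (G : SimpleGraph (Euc m)) (γ ε : ℝ) (hε : 0 < ε) (hγ : 1 ≤ γ)
    (hsample : ∀ p ∈ C, ∃ q ∈ shape T pos, dist p q ≤ ε)
    (hGsupport : ∀ a b, G.Adj a b → a ∈ C ∧ b ∈ C)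
    (hGconn : ∀ a ∈ C, ∀ b ∈ C, G.Reachable a b)
    (happrox1 : ∀ e ∈ T.edgeSet, ∀ a ∈ C, ∀ b ∈ C,
        a ∈ offset (edgeSeg pos e) ε → b ∈ offset (edgeSeg pos e) ε →
        pathDist G a b ≤ γ * dist a b)
    (happrox2 : ∀ e ∈ T.edgeSet, ∀ h ∈ T.edgeSet, nonAdjacent e h →
        lmax G + 2 * ε < setDist (edgeSeg pos e) (edgeSeg pos h))
    (e : Sym2 V) (he : e ∈ T.edgeSet)
    (C₁ C₂ : Set V) (hne₁ : C₁.Nonempty) (hne₂ : C₂.Nonempty)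
    (hdisj : Disjoint C₁ C₂) (hunion : C₁ ∪ C₂ = Set.univ)
    (hcomp : ∀ x y : V, (T.deleteEdges {e}).Reachable x y ↔
        ((x ∈ C₁ ∧ y ∈ C₁) ∨ (x ∈ C₂ ∧ y ∈ C₂)))
    (a b : Euc m) (haC : a ∈ C) (hbC : b ∈ C)
    (ha : a ∈ offset (shapeOn T pos C₁) ε) (hb : b ∈ offset (shapeOn T pos C₂) ε)
    (s : G.Walk a b) (hs : walkCost s = pathDist G a b) :
    ∃ p ∈ s.support, p ∈ C ∧ p ∈ offset (edgeSeg pos e) ε := by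
  classical
  by_contra hcon
  push_neg at hcon
  -- All support points lie in `C`.
  have hmemC : ∀ p ∈ s.support, p ∈ C := aux_walk_support_mem hGsupport s haC
  -- The two "side" predicates.
  set S₁ : Euc m → Prop := fun p =>
    ∃ h ∈ T.edgeSet, (∀ x ∈ h, x ∈ C₁) ∧ ∃ z ∈ edgeSeg pos h, dist p z ≤ ε with hS₁def
  set S₂ : Euc m → Prop := fun p =>
    ∃ h ∈ T.edgeSet, (∀ x ∈ h, x ∈ C₂) ∧ ∃ z ∈ edgeSeg pos h, dist p z ≤ ε with hS₂def
  have hlmax : (0 : ℝ) ≤ lmax G := aux_lmax_nonneg G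
  -- A point near a `C₁`-edge and a `C₂`-edge cannot be closer than their set distance.
  have hnonadj : ∀ h₁ ∈ T.edgeSet, ∀ h₂ ∈ T.edgeSet, (∀ x ∈ h₁, x ∈ C₁) →
      (∀ x ∈ h₂, x ∈ C₂) → nonAdjacent h₁ h₂ := by
    intro h₁ hh₁ h₂ hh₂ hin₁ hin₂
    constructor
    · intro hEq
      have h1 : h₁.out.1 ∈ C₁ := hin₁ _ (Sym2.out_fst_mem h₁)
      have h2 : h₁.out.1 ∈ C₂ := hin₂ _ (hEq ▸ Sym2.out_fst_mem h₁)
      exact Set.disjoint_left.mp hdisj h1 h2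
    · intro z hz hz'
      exact Set.disjoint_left.mp hdisj (hin₁ z hz) (hin₂ z hz')
  have hexcl : ∀ p, S₁ p → S₂ p → False := by
    rintro p ⟨h₁, hh₁, hin₁, z₁, hz₁, hd₁⟩ ⟨h₂, hh₂, hin₂, z₂, hz₂, hd₂⟩
    have hkey := happrox2 h₁ hh₁ h₂ hh₂ (hnonadj h₁ hh₁ h₂ hh₂ hin₁ hin₂)
    have hle : setDist (edgeSeg pos h₁) (edgeSeg pos h₂) ≤ dist z₁ z₂ :=
      aux_setDist_le hz₁ hz₂
    have htri : dist z₁ z₂ ≤ dist z₁ p + dist p z₂ := dist_triangle _ _ _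
    rw [dist_comm z₁ p] at htri
    linarith
  -- For a support point `p`, near-`e` is forbidden, so it finds a side.
  have hside : ∀ p ∈ s.support, S₁ p ∨ S₂ p := by
    intro p hp
    have hpC : p ∈ C := hmemC p hp
    obtain ⟨q, hq, hdq⟩ := hsample p hpC
    simp only [shape, Set.mem_iUnion] at hq
    obtain ⟨h, hh, hqh⟩ := hq
    have hne : h ≠ e := by
      rintro rfl
      exact hcon p hp hpC ⟨q, hqh, hdq⟩
    rcases aux_edge_side hcomp h hh hne with hin | hin
    · exact Or.inl ⟨h, hh, hin, q, hqh, hdq⟩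
    · exact Or.inr ⟨h, hh, hin, q, hqh, hdq⟩
  -- A point near `shapeOn T pos Cᵢ` (and, being on the walk, not near `e`) has side `i`.
  have hendpoint : ∀ (Ci Cj : Set V), (∀ z, z ∈ Ci → z ∉ Cj) →
      (∀ h ∈ T.edgeSet, h ≠ e → (∀ x ∈ h, x ∈ Ci) ∨ (∀ x ∈ h, x ∈ Cj)) →
      ∀ p : Euc m, p ∈ s.support → p ∈ C →
      p ∈ offset (shapeOn T pos Ci) ε →
      ∃ h ∈ T.edgeSet, (∀ x ∈ h, x ∈ Ci) ∧ ∃ z ∈ edgeSeg pos h, dist p z ≤ ε := by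
    intro Ci Cj hd hsides p hp hpC hpo
    obtain ⟨w, hw, hdw⟩ := hpo
    rcases hw with ⟨x, hx, rfl⟩ | hw
    · -- `w = pos x` with `x ∈ Ci`: use an edge of `T` incident to `x`.
      obtain ⟨y, hxy⟩ := aux_exists_incident hT.isConnected he x
      have hxmem : pos x ∈ edgeSeg pos s(x, y) := left_mem_segment ℝ (pos x) (pos y)
      by_cases heq : s(x, y) = e
      · exact absurd ⟨pos x, heq ▸ hxmem, hdw⟩ (hcon p hp hpC)
      · rcases hsides s(x, y) ((SimpleGraph.mem_edgeSet _).mpr hxy) heq with hin | hin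
        · exact ⟨s(x, y), (SimpleGraph.mem_edgeSet _).mpr hxy, hin, pos x, hxmem, hdw⟩
        · exact absurd (hin x (Sym2.mem_mk_left x y)) (hd x hx)
    · simp only [Set.mem_iUnion, Set.mem_setOf_eq] at hw
      obtain ⟨h, ⟨hh, hin⟩, hwh⟩ := hw
      exact ⟨h, hh, hin, w, hwh, hdw⟩
  have hSa : S₁ a :=
    hendpoint C₁ C₂ (fun z h1 h2 => Set.disjoint_left.mp hdisj h1 h2)
      (fun h hh hne => aux_edge_side hcomp h hh hne)
      a s.start_mem_support haC ha
  have hSb : S₂ b :=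
    hendpoint C₂ C₁ (fun z h1 h2 => Set.disjoint_left.mp hdisj h2 h1)
      (fun h hh hne => (aux_edge_side hcomp h hh hne).symm)
      b s.end_mem_support hbC hb
  -- Find a crossing edge of the walk and obtain a contradiction.
  obtain ⟨p, q, hpq, hSp, hSq⟩ := aux_walk_flip S₁ S₂ hexcl s hside hSa hSb
  obtain ⟨h₁, hh₁, hin₁, z₁, hz₁, hd₁⟩ := hSp
  obtain ⟨h₂, hh₂, hin₂, z₂, hz₂, hd₂⟩ := hSq
  have hkey := happrox2 h₁ hh₁ h₂ hh₂ (hnonadj h₁ hh₁ h₂ hh₂ hin₁ hin₂)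
  have hle : setDist (edgeSeg pos h₁) (edgeSeg pos h₂) ≤ dist z₁ z₂ :=
    aux_setDist_le hz₁ hz₂
  have hpql : dist p q ≤ lmax G := aux_dist_le_lmax hC hGsupport hpq
  have htri : dist z₁ z₂ ≤ dist z₁ p + dist p q + dist q z₂ :=
    dist_triangle4 z₁ p q z₂
  rw [dist_comm z₁ p] at htri
  linarith
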